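/- Let S be a finite poset and k a field. An S-space V is simple (every nonzero proper monomorphism into V is an isomorphism) if and only if its ambient space is one-dimensional. Moreover, the isomorphism classes of simple S-spaces are in bijection with the antichains of S: for each antichain A, the simple S-space k_A has ambient space k and k_A(s) = k if a ≤ s for some a ∈ A, and 0 otherwise, and k_A ≅ k_B implies A = B. -/

import Mathlib

/-- An `S`-space over a field `k`: a finite-dimensional `k`-vector space together with a
monotone family of subspaces indexed by the poset `S`. -/
structure PSp (k : Type) [Field k] (S : Type) [Preorder S] where
  carrier : Type
  [acg : AddCommGroup carrier]
  [mod : Module k carrier]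
  [fin : FiniteDimensional k carrier]
  sub : S → Submodule k carrier
  mono : ∀ {s t : S}, s ≤ t → sub s ≤ sub t

attribute [instance] PSp.acg PSp.mod PSp.fin

variable {k : Type} [Field k] {S : Type} [PartialOrder S] [Fintype S]

/-- A morphism of `S`-spaces: a `k`-linear map respecting the distinguished subspaces. -/
@[ext]
structure PHom (U V : PSp k S) where
  toLinearMap : U.carrier →ₗ[k] V.carrier
  maps : ∀ s : S, ∀ x ∈ U.sub s, toLinearMap x ∈ V.sub s

/-- Composition of morphisms of `S`-spaces. -/
def PHom.comp {U V W : PSp k S} (g : PHom V W) (f : PHom U V) : PHom U W :=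
  ⟨g.toLinearMap ∘ₗ f.toLinearMap, fun s x hx => g.maps s _ (f.maps s x hx)⟩

/-- The identity morphism of an `S`-space. -/
def PHom.id (U : PSp k S) : PHom U U := ⟨LinearMap.id, fun _ _ hx => hx⟩

/-- A morphism `f : U → V` of `S`-spaces is proper if `f(U(s)) = V(s) ∩ im f` for all `s`. -/
def PHom.Proper {U V : PSp k S} (f : PHom U V) : Prop :=
  ∀ s : S, (U.sub s).map f.toLinearMap = V.sub s ⊓ LinearMap.range f.toLinearMap

open Classical in
/-- The `S`-space `k_A` associated to an antichain `A`: ambient space `k`, with subspace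
`k` at `s` iff `a ≤ s` for some `a ∈ A`, and `0` otherwise. -/
noncomputable def kASp (k : Type) [Field k] {S : Type} [PartialOrder S] (A : Set S) :
    PSp k S where
  carrier := k
  sub s := if ∃ a ∈ A, a ≤ s then ⊤ else ⊥
  mono := by
    intro s t h
    try dsimp only
    by_cases hs : ∃ a ∈ A, a ≤ s
    · obtain ⟨a, ha, has⟩ := hs
      rw [if_pos ⟨a, ha, has⟩, if_pos ⟨a, ha, has.trans h⟩]
    · rw [if_neg hs]
      exact bot_le

/-- Isomorphism of `S`-spaces. -/
def PIso {k : Type} [Field k] {S : Type} [PartialOrder S] (U V : PSp k S) : Prop :=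
  ∃ (f : PHom U V) (g : PHom V U), f.comp g = PHom.id V ∧ g.comp f = PHom.id U

/-- A nonzero `S`-space is simple if every nonzero proper monomorphism into it is an
isomorphism. -/
def PSimple {k : Type} [Field k] {S : Type} [PartialOrder S] (V : PSp k S) : Prop :=
  (∃ x : V.carrier, x ≠ 0) ∧
  ∀ (U : PSp k S) (g : PHom U V), g.toLinearMap ≠ 0 → Function.Injective g.toLinearMap →
    g.Proper → ∃ h : PHom V U, g.comp h = PHom.id V ∧ h.comp g = PHom.id U

lemma kASp_sub_eq_top {A : Set S} {s : S} (h : ∃ a ∈ A, a ≤ s) :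
    (kASp k A).sub s = ⊤ := by
  simp only [kASp]
  rw [if_pos h]
  rfl

lemma kASp_sub_eq_bot {A : Set S} {s : S} (h : ¬ ∃ a ∈ A, a ≤ s) :
    (kASp k A).sub s = ⊥ := by
  simp only [kASp]
  rw [if_neg h]
  rfl

lemma sub_eq_bot_or_top {V : PSp k S} (hV : Module.finrank k V.carrier = 1) (s : S) :
    V.sub s = ⊥ ∨ V.sub s = ⊤ := by
  have : IsSimpleModule k V.carrier := isSimpleModule_iff_finrank_eq_one.mpr hV
  exact eq_bot_or_eq_top (V.sub s)

lemma simple_of_finrank_one (V : PSp k S) (hV : Module.finrank k V.carrier = 1) :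
    PSimple V := by
  constructor
  · have : Nontrivial V.carrier := by
      apply Module.nontrivial_of_finrank_pos (R := k); omega
    exact exists_ne 0
  · intro U g hg hinj hprop
    have hU1 : Nontrivial U.carrier := by
      by_contra h
      apply hg
      ext x
      have : Subsingleton U.carrier := not_nontrivial_iff_subsingleton.mp h
      rw [Subsingleton.elim x 0]
      simp
    have hU : Module.finrank k U.carrier = 1 := by
      have h2 : Module.finrank k U.carrier ≤ Module.finrank k V.carrier :=
        LinearMap.finrank_le_finrank_of_injective hinj
      have h1 : 0 < Module.finrank k U.carrier := Module.finrank_pos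
      omega
    have hsurj : Function.Surjective g.toLinearMap :=
      (LinearMap.injective_iff_surjective_of_finrank_eq_finrank (hU.trans hV.symm)).mp hinj
    let e := LinearEquiv.ofBijective g.toLinearMap ⟨hinj, hsurj⟩
    have hmaps : ∀ s : S, ∀ x ∈ V.sub s, e.symm x ∈ U.sub s := by
      intro s x hx
      have hr : LinearMap.range g.toLinearMap = ⊤ := LinearMap.range_eq_top.mpr hsurj
      have : x ∈ (U.sub s).map g.toLinearMap := by
        rw [hprop s, hr]; exact ⟨hx, trivial⟩
      obtain ⟨u, hu, hux⟩ := this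
      have : e.symm x = u := by
        apply hinj
        have : g.toLinearMap (e.symm x) = x := e.apply_symm_apply x
        rw [this, hux]
      rw [this]; exact hu
    refine ⟨⟨e.symm.toLinearMap, hmaps⟩, ?_, ?_⟩
    · apply PHom.ext
      apply LinearMap.ext
      intro x
      exact e.apply_symm_apply x
    · apply PHom.ext
      apply LinearMap.ext
      intro x
      exact e.symm_apply_apply x

lemma finrank_one_of_simple (V : PSp k S) (hV : PSimple V) :
    Module.finrank k V.carrier = 1 := by
  obtain ⟨⟨x, hx⟩, hsimp⟩ := hV
  set L := Submodule.span k {x} with hL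
  let U : PSp k S :=
    { carrier := L
      sub := fun s => (V.sub s).comap L.subtype
      mono := fun h => Submodule.comap_mono (V.mono h) }
  have hxL : x ∈ L := Submodule.mem_span_singleton_self x
  let g : PHom U V := ⟨L.subtype, fun _ _ hu => hu⟩
  have hg : g.toLinearMap ≠ 0 := by
    intro h
    apply hx
    have : g.toLinearMap ⟨x, hxL⟩ = x := rfl
    rw [h] at this
    simpa using this.symm
  have hinj : Function.Injective g.toLinearMap := Submodule.injective_subtype L
  have hprop : g.Proper := by
    intro s
    show ((V.sub s).comap L.subtype).map L.subtype = _
    rw [Submodule.map_comap_eq, Submodule.range_subtype, inf_comm]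
  obtain ⟨h, hgh, _⟩ := hsimp U g hg hinj hprop
  have hsurj : Function.Surjective g.toLinearMap := by
    intro v
    refine ⟨h.toLinearMap v, ?_⟩
    have := congrArg PHom.toLinearMap hgh
    exact LinearMap.congr_fun this v
  have hLtop : L = ⊤ := by
    rw [← Submodule.range_subtype L]
    exact LinearMap.range_eq_top.mpr hsurj
  have h1 : Module.finrank k L = 1 := finrank_span_singleton hx
  rw [hLtop] at h1
  rwa [finrank_top] at h1

/-- An `S`-space is simple iff its ambient space is one-dimensional, and the
isomorphism classes of simple `S`-spaces are in bijection with the antichains of `S` via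
`A ↦ k_A`. -/
theorem stmt15 :
    (∀ V : PSp k S, PSimple V ↔ Module.finrank k V.carrier = 1) ∧
    (∀ A : Set S, IsAntichain (· ≤ ·) A → PSimple (kASp k A)) ∧
    (∀ V : PSp k S, PSimple V → ∃ A : Set S, IsAntichain (· ≤ ·) A ∧ PIso V (kASp k A)) ∧
    (∀ A B : Set S, IsAntichain (· ≤ ·) A → IsAntichain (· ≤ ·) B →
      PIso (kASp k A) (kASp k B) → A = B) := by
  classical
  have hkA : ∀ A : Set S, Module.finrank k (kASp k A).carrier = 1 := fun A =>
    Module.finrank_self k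
  -- key fact for part 4: the "support" determines whether sub is ⊤
  have key : ∀ A B : Set S, PIso (kASp k A) (kASp k B) →
      ∀ s : S, (∃ a ∈ A, a ≤ s) → ∃ b ∈ B, b ≤ s := by
    intro A B ⟨f, g, hfg, hgf⟩ s hs
    by_contra hb
    have hnt : Nontrivial (kASp k A).carrier := by
      apply Module.nontrivial_of_finrank_pos (R := k)
      rw [hkA A]; omega
    obtain ⟨x, hx⟩ := exists_ne (0 : (kASp k A).carrier)
    have h1 : x ∈ (kASp k A).sub s := by
      rw [kASp_sub_eq_top hs]; trivial
    have h2 : f.toLinearMap x ∈ (kASp k B).sub s := f.maps s x h1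
    rw [kASp_sub_eq_bot hb, Submodule.mem_bot] at h2
    have h3 : g.toLinearMap (f.toLinearMap x) = x :=
      LinearMap.congr_fun (congrArg PHom.toLinearMap hgf) x
    rw [h2] at h3
    simp at h3
    exact hx h3.symm
  refine ⟨fun V => ⟨finrank_one_of_simple V, simple_of_finrank_one V⟩, ?_, ?_, ?_⟩
  · intro A _
    exact simple_of_finrank_one _ (hkA A)
  · intro V hV
    have hV1 : Module.finrank k V.carrier = 1 := finrank_one_of_simple V hV
    set T : Set S := {s | V.sub s = ⊤} with hT
    set A : Set S := {s ∈ T | ∀ t ∈ T, t ≤ s → t = s} with hA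
    have hAnti : IsAntichain (· ≤ ·) A := by
      intro a ha b hb hne hab
      exact hne (hb.2 a ha.1 hab)
    have claim : ∀ s : S, (∃ a ∈ A, a ≤ s) ↔ V.sub s = ⊤ := by
      intro s
      constructor
      · rintro ⟨a, ha, has⟩
        have := V.mono has
        rw [ha.1] at this
        exact top_le_iff.mp this
      · intro hs
        set F : Finset S := Finset.univ.filter (fun t => V.sub t = ⊤ ∧ t ≤ s) with hF
        have hsF : s ∈ F := by simp [hF, hs]
        obtain ⟨m, hmF, hmin⟩ := F.exists_minimal ⟨s, hsF⟩
        simp only [hF, Finset.mem_filter, Finset.mem_univ, true_and] at hmF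
        refine ⟨m, ⟨hmF.1, ?_⟩, hmF.2⟩
        intro t ht htm
        by_contra hne
        have ht' : V.sub t = ⊤ := ht
        exact hne (le_antisymm htm (hmin (by simp [hF, ht', htm.trans hmF.2]) htm))
    obtain ⟨e⟩ : Nonempty (V.carrier ≃ₗ[k] (kASp k A).carrier) :=
      FiniteDimensional.nonempty_linearEquiv_of_finrank_eq (hV1.trans (hkA A).symm)
    refine ⟨A, hAnti, ⟨e.toLinearMap, ?_⟩, ⟨e.symm.toLinearMap, ?_⟩, ?_, ?_⟩
    · intro s x hx
      by_cases hs : ∃ a ∈ A, a ≤ s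
      · rw [kASp_sub_eq_top hs]; trivial
      · rcases sub_eq_bot_or_top hV1 s with h | h
        · rw [h, Submodule.mem_bot] at hx
          rw [kASp_sub_eq_bot hs, hx]
          simp
        · exact absurd ((claim s).mpr h) hs
    · intro s x hx
      by_cases hs : ∃ a ∈ A, a ≤ s
      · rw [(claim s).mp hs]; trivial
      · rw [kASp_sub_eq_bot hs, Submodule.mem_bot] at hx
        rw [hx]
        simp
    · apply PHom.ext
      exact LinearMap.ext fun x => e.apply_symm_apply x
    · apply PHom.ext
      exact LinearMap.ext fun x => e.symm_apply_apply x
  · intro A B hAa hBa hiso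
    have hiso' : PIso (kASp k B) (kASp k A) := by
      obtain ⟨f, g, hfg, hgf⟩ := hiso
      exact ⟨g, f, hgf, hfg⟩
    have hsub : ∀ a ∈ A, a ∈ B := by
      intro a ha
      obtain ⟨b, hb, hba⟩ := key A B hiso a ⟨a, ha, le_refl a⟩
      obtain ⟨a', ha', ha'b⟩ := key B A hiso' b ⟨b, hb, le_refl b⟩
      have : a' = a := by
        by_contra hne
        exact hAa ha' ha hne (ha'b.trans hba)
      rw [this] at ha'b
      have : a = b := le_antisymm ha'b hba
      rwa [this]
    have hsub' : ∀ b ∈ B, b ∈ A := by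
      intro b hb
      obtain ⟨a, ha, hab⟩ := key B A hiso' b ⟨b, hb, le_refl b⟩
      obtain ⟨b', hb', hb'a⟩ := key A B hiso a ⟨a, ha, le_refl a⟩
      have : b' = b := by
        by_contra hne
        exact hBa hb' hb hne (hb'a.trans hab)
      rw [this] at hb'a
      have : b = a := le_antisymm hb'a hab
      rwa [this]
    ext x
    exact ⟨hsub x, hsub' x⟩
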